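/- Let g : {0,1}^d → {0,1} be computed exactly by a ReLU network of size m̃, and let f be the associated 4-Lipschitz extension. Then there exists a ReLU network Ñ of size m̃ + 2d such that Ñ(x) = f(x) for every x ∈ ([0,1/4] ∪ [3/4,1])^d; in particular ‖Ñ − f‖_{L2(μ)} = 0. -/

import Mathlib

noncomputable section

/-- The ReLU activation. -/
def relu (t : ℝ) : ℝ := max 0 t

/-- A feedforward neural network from `ℝ^n` to `ℝ^q`, given as a sequence of affine
layers; the activation is applied coordinatewise after every affine layer except the
last one. -/
inductive Net : ℕ → ℕ → Type where
  | last {n q : ℕ} (A : Fin q → Fin n → ℝ) (b : Fin q → ℝ) : Net n q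
  | layer {n m q : ℕ} (A : Fin m → Fin n → ℝ) (b : Fin m → ℝ) (rest : Net m q) : Net n q

/-- Evaluation of a network with activation `σ`. -/
def Net.eval (σ : ℝ → ℝ) : {n q : ℕ} → Net n q → (Fin n → ℝ) → Fin q → ℝ
  | _, _, .last A b, x, i => (∑ j, A i j * x j) + b i
  | _, _, .layer A b rest, x, i => rest.eval σ (fun m => σ ((∑ j, A m j * x j) + b m)) i

/-- The size of a network: the total number of neurons. -/
def Net.size : {n q : ℕ} → Net n q → ℕ
  | _, q, .last _ _ => q
  | _, _, .layer (m := m) _ _ rest => m + rest.size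

/-- Boolean bit as a real number. -/
def bR (b : Bool) : ℝ := if b then 1 else 0

/-- `A_z = {x ∈ [0,1]^d : |x_i − z_i| ≤ 1/4 for all i}`. -/
def Az {d : ℕ} (z : Fin d → Bool) : Set (EuclideanSpace ℝ (Fin d)) :=
  {x | ∀ i, x i ∈ Set.Icc (0:ℝ) 1 ∧ |x i - bR (z i)| ≤ 1/4}

/-- Given `g : {0,1}^d → {0,1}`, the associated real function
`f(x) = Σ_{z∈{0,1}^d} g(z)·max(0, 1 − 4·dist(x, A_z))` (Euclidean distance to `A_z`). -/
def fg {d : ℕ} (g : (Fin d → Bool) → Bool) (x : EuclideanSpace ℝ (Fin d)) : ℝ :=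
  ∑ z : Fin d → Bool, bR (g z) * max 0 (1 - 4 * Metric.infDist x (Az z))

/-- A vector of `ℝ^d` viewed as a point of Euclidean space. -/
def toEuc {d : ℕ} (x : Fin d → ℝ) : EuclideanSpace ℝ (Fin d) := WithLp.toLp 2 x

/-- Precompose a network with a linear map (folded into the first affine layer). -/
def Net.precomp {n n' q : ℕ} (M : Fin n → Fin n' → ℝ) : Net n q → Net n' q
  | .last A b => .last (fun i j => ∑ k, A i k * M k j) b
  | .layer A b rest => .layer (fun i j => ∑ k, A i k * M k j) b rest

lemma precomp_size {n n' q : ℕ} (M : Fin n → Fin n' → ℝ) (N : Net n q) :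
    (N.precomp M).size = N.size := by
  cases N <;> rfl

lemma affine_comp {n n' : ℕ} (A : Fin n → ℝ) (M : Fin n → Fin n' → ℝ) (x : Fin n' → ℝ) :
    (∑ j, (∑ k, A k * M k j) * x j) = ∑ k, A k * (∑ j, M k j * x j) := by
  simp only [Finset.sum_mul, mul_assoc]
  rw [Finset.sum_comm]
  simp [Finset.mul_sum]

lemma precomp_eval {n n' q : ℕ} (σ : ℝ → ℝ) (M : Fin n → Fin n' → ℝ) (N : Net n q)
    (x : Fin n' → ℝ) (i : Fin q) :
    (N.precomp M).eval σ x i = N.eval σ (fun k => ∑ j, M k j * x j) i := by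
  cases N with
  | last A b => simp only [Net.precomp, Net.eval, affine_comp]
  | layer A b rest =>
      simp only [Net.precomp, Net.eval]
      congr 1
      funext m
      rw [affine_comp]

lemma dist_coord_le {d : ℕ} (x y : EuclideanSpace ℝ (Fin d)) (i : Fin d) :
    dist (x i) (y i) ≤ dist x y := by
  rw [EuclideanSpace.dist_eq]
  have h1 : dist (x i) (y i) ^ 2 ≤ ∑ j, dist (x j) (y j) ^ 2 :=
    Finset.single_le_sum (f := fun j => dist (x j) (y j) ^ 2)
      (fun j _ => sq_nonneg _) (Finset.mem_univ i)
  calc dist (x i) (y i) = Real.sqrt (dist (x i) (y i) ^ 2) := (Real.sqrt_sq dist_nonneg).symm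
    _ ≤ _ := Real.sqrt_le_sqrt h1

lemma fg_on_cube {d : ℕ} (g : (Fin d → Bool) → Bool) (x : Fin d → ℝ)
    (hx : ∀ i, x i ∈ Set.Icc (0:ℝ) (1/4) ∪ Set.Icc (3/4) 1) :
    fg g (toEuc x) = bR (g (fun i => decide ((3:ℝ)/4 ≤ x i))) := by
  set z : Fin d → Bool := fun i => decide ((3:ℝ)/4 ≤ x i) with hz
  have hmem : toEuc x ∈ Az z := by
    intro i
    simp only [toEuc, PiLp.toLp_apply]
    rcases hx i with h | h
    · have : z i = false := by
        simp [hz, decide_eq_false_iff_not]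
        linarith [h.2]
      rw [this]
      simp only [bR, if_neg Bool.false_ne_true]
      constructor
      · exact ⟨h.1, by linarith [h.2]⟩
      · rw [sub_zero, abs_of_nonneg h.1]; exact h.2
    · have hzt : z i = true := by simp [hz]; linarith [h.1]
      rw [hzt]
      have hb : bR true = 1 := by norm_num [bR]
      rw [hb]
      refine ⟨⟨by linarith [h.1], h.2⟩, ?_⟩
      rw [abs_le]
      constructor <;> linarith [h.1, h.2]
  have hfar : ∀ z' : Fin d → Bool, z' ≠ z → (1:ℝ)/2 ≤ Metric.infDist (toEuc x) (Az z') := by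
    intro z' hne
    have hne' : ∃ i, z' i ≠ z i := by
      by_contra h
      push_neg at h
      exact hne (funext h)
    obtain ⟨i, hi⟩ := hne'
    have hnonempty : (Az z').Nonempty := by
      refine ⟨toEuc (fun j => bR (z' j)), fun j => ?_⟩
      constructor
      · cases hb : z' j <;> simp [bR, toEuc, hb]
      · simp [toEuc]
    by_contra hlt
    push_neg at hlt
    rw [Metric.infDist_lt_iff hnonempty] at hlt
    obtain ⟨y, hy, hdlt⟩ := hlt
    have h1 : |x i - bR (z i)| ≤ 1/4 := by simpa [toEuc] using (hmem i).2
    have h2 : |y i - bR (z' i)| ≤ 1/4 := (hy i).2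
    have h3 : |bR (z i) - bR (z' i)| = 1 := by
      cases hzi : z i <;> cases hzi' : z' i <;> simp_all [bR] <;> linarith
    have h4 : dist (x i) (y i) ≤ dist (toEuc x) y := dist_coord_le (toEuc x) y i
    have h5 : dist (x i) (y i) = |x i - y i| := Real.dist_eq _ _
    have h6 : (1:ℝ) = |bR (z i) - bR (z' i)| := h3.symm
    have h7 : |bR (z i) - bR (z' i)| ≤ |x i - bR (z i)| + |x i - y i| + |y i - bR (z' i)| := by
      calc |bR (z i) - bR (z' i)|
          = |(bR (z i) - x i) + (x i - y i) + (y i - bR (z' i))| := by ring_nf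
        _ ≤ |bR (z i) - x i| + |x i - y i| + |y i - bR (z' i)| := by
            exact le_trans (abs_add_le _ _) (by gcongr; exact abs_add_le _ _)
        _ = |x i - bR (z i)| + |x i - y i| + |y i - bR (z' i)| := by rw [abs_sub_comm]
    rw [h3] at h7
    have : (1:ℝ)/2 ≤ |x i - y i| := by linarith
    linarith [h4, hdlt, h5 ▸ this]
  rw [fg]
  rw [Finset.sum_eq_single z]
  · rw [Metric.infDist_zero_of_mem hmem]
    norm_num
  · intro z' _ hne
    have := hfar z' hne
    have : max 0 (1 - 4 * Metric.infDist (toEuc x) (Az z')) = 0 :=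
      max_eq_left (by linarith)
    rw [this, mul_zero]
  · intro h; exact absurd (Finset.mem_univ z) h

/-- First-layer weights: neuron `i` computes `relu (8 x_{i mod d} - (5 or 6))`. -/
def W1 (d : ℕ) : Fin (2*d) → Fin d → ℝ := fun i j =>
  if i.val = j.val ∨ i.val = j.val + d then 8 else 0

def c1 (d : ℕ) : Fin (2*d) → ℝ := fun i => if i.val < d then -5 else -6

/-- Combination weights folded into the first layer of `N`. -/
def Mlin (d : ℕ) : Fin d → Fin (2*d) → ℝ := fun k j =>
  if j.val = k.val then 1 else if j.val = k.val + d then -1 else 0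

lemma clamp_bit (t : ℝ) (ht : t ∈ Set.Icc (0:ℝ) (1/4) ∪ Set.Icc (3/4) 1) :
    relu (8*t - 5) - relu (8*t - 6) = bR (decide ((3:ℝ)/4 ≤ t)) := by
  rcases ht with h | h
  · have h1 : ¬ ((3:ℝ)/4 ≤ t) := by rcases h with ⟨_, h2⟩; intro hc; linarith
    rw [decide_eq_false h1]
    have e1 : relu (8*t - 5) = 0 := max_eq_left (by rcases h with ⟨_, h2⟩; linarith)
    have e2 : relu (8*t - 6) = 0 := max_eq_left (by rcases h with ⟨_, h2⟩; linarith)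
    rw [e1, e2]; norm_num [bR]
  · have h1 : (3:ℝ)/4 ≤ t := h.1
    rw [decide_eq_true h1]
    have e1 : relu (8*t - 5) = 8*t - 5 := max_eq_right (by linarith)
    have e2 : relu (8*t - 6) = 8*t - 6 := max_eq_right (by linarith)
    rw [e1, e2]; norm_num [bR]

lemma sum_ite_single {d : ℕ} (c : Fin d) (v : Fin d → ℝ) :
    (∑ j, (if j = c then (8:ℝ) else 0) * v j) = 8 * v c := by
  rw [Finset.sum_eq_single c]
  · simp
  · intro j _ hj; simp [hj]
  · intro h; exact absurd (Finset.mem_univ c) h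

lemma layer_sum_eq {d : ℕ} (x : Fin d → ℝ)
    (hx : ∀ i, x i ∈ Set.Icc (0:ℝ) (1/4) ∪ Set.Icc (3/4) 1) (k : Fin d) :
    (∑ j : Fin (2*d), Mlin d k j * relu ((∑ j', W1 d j j' * x j') + c1 d j))
      = bR (decide ((3:ℝ)/4 ≤ x k)) := by
  have hd : k.val < d := k.isLt
  set y : Fin (2*d) → ℝ := fun m => relu ((∑ j', W1 d m j' * x j') + c1 d m) with hy
  have hkd : k.val < 2*d := by omega
  have hk2 : k.val + d < 2*d := by omega
  set j1 : Fin (2*d) := ⟨k.val, hkd⟩ with hj1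
  set j2 : Fin (2*d) := ⟨k.val + d, hk2⟩ with hj2
  have hj12 : j1 ≠ j2 := by simp [hj1, hj2, Fin.ext_iff]; omega
  have hMj : ∀ j : Fin (2*d), Mlin d k j * y j =
      (if j = j1 then y j1 else 0) + (if j = j2 then -(y j2) else 0) := by
    intro j
    by_cases h1 : j = j1
    · subst h1
      have hm : Mlin d k j1 = 1 := by simp [Mlin, hj1]
      rw [hm, if_pos rfl, if_neg hj12, one_mul, add_zero]
    · by_cases h2 : j = j2
      · subst h2
        have hm : Mlin d k j2 = -1 := by
          have h : ¬ (k.val + d = k.val) := by omega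
          have h' : d ≠ 0 := by omega
          simp [Mlin, hj2, h, h']
        rw [hm, if_neg (Ne.symm (by simpa [eq_comm] using hj12)), if_pos rfl]
        ring
      · have hv1 : j.val ≠ k.val := fun hc => h1 (Fin.ext (by simpa [hj1] using hc))
        have hv2 : j.val ≠ k.val + d := fun hc => h2 (Fin.ext (by simpa [hj2] using hc))
        have hm : Mlin d k j = 0 := by simp [Mlin, hv1, hv2]
        rw [hm, if_neg h1, if_neg h2, zero_mul, add_zero]
  have hsum : (∑ j : Fin (2*d), Mlin d k j * y j) = y j1 - y j2 := by
    rw [Finset.sum_congr rfl (fun j _ => hMj j), Finset.sum_add_distrib,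
      Finset.sum_ite_eq' Finset.univ j1 (fun _ => y j1),
      Finset.sum_ite_eq' Finset.univ j2 (fun _ => -(y j2))]
    simp [sub_eq_add_neg]
  have hW : ∀ (m : Fin (2*d)), m.val = k.val ∨ m.val = k.val + d →
      (∑ j', W1 d m j' * x j') = 8 * x k := by
    intro m hm
    have heach : ∀ j'' : Fin d, W1 d m j'' * x j'' = (if j'' = k then (8:ℝ) else 0) * x j'' := by
      intro j''
      congr 1
      simp only [W1]
      by_cases h : j'' = k
      · subst h
        rcases hm with hm | hm
        · rw [if_pos (Or.inl hm), if_pos rfl]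
        · rw [if_pos (Or.inr hm), if_pos rfl]
      · have hv : j''.val ≠ k.val := fun hc => h (Fin.ext hc)
        have hlt : j''.val < d := j''.isLt
        rw [if_neg (by rcases hm with hm | hm <;> (push_neg; exact ⟨by omega, by omega⟩)),
          if_neg h]
    rw [Finset.sum_congr rfl (fun j'' _ => heach j''), sum_ite_single]
  have hy1 : y j1 = relu (8 * x k - 5) := by
    simp only [hy]
    rw [hW j1 (Or.inl rfl)]
    have : c1 d j1 = -5 := if_pos hd
    rw [this]
    congr 1
  have hy2 : y j2 = relu (8 * x k - 6) := by
    simp only [hy]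
    rw [hW j2 (Or.inr rfl)]
    have : c1 d j2 = -6 := if_neg (by simp [hj2])
    rw [this]
    congr 1
  rw [hsum, hy1, hy2]
  exact clamp_bit (x k) (hx k)


/-- let `g : {0,1}^d → {0,1}` be computed exactly by a ReLU network of
size `m̃`, and let `f` be the associated `4`-Lipschitz extension. Then there is a ReLU
network `Ñ` of size `m̃ + 2d` such that `Ñ(x) = f(x)` for every
`x ∈ ([0,1/4] ∪ [3/4,1])^d`; in particular `‖Ñ − f‖_{L2(μ)} = 0` for the uniform
distribution `μ` on that set. -/
theorem exact_net_for_lipschitz_extension (d : ℕ) (g : (Fin d → Bool) → Bool)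
    (N : Net d 1)
    (hN : ∀ z : Fin d → Bool, N.eval relu (fun i => bR (z i)) 0 = bR (g z)) :
    ∃ Ntil : Net d 1, Ntil.size = N.size + 2 * d ∧
      ∀ x : Fin d → ℝ,
        (∀ i, x i ∈ Set.Icc (0:ℝ) (1/4) ∪ Set.Icc (3/4) 1) →
        Ntil.eval relu x 0 = fg g (toEuc x) := by
  refine ⟨Net.layer (W1 d) (c1 d) (N.precomp (Mlin d)), ?_, ?_⟩
  · show 2*d + (N.precomp (Mlin d)).size = N.size + 2*d
    rw [precomp_size]; ring
  · intro x hx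
    rw [fg_on_cube g x hx]
    calc (Net.layer (W1 d) (c1 d) (N.precomp (Mlin d))).eval relu x 0
        = (N.precomp (Mlin d)).eval relu
            (fun m => relu ((∑ j', W1 d m j' * x j') + c1 d m)) 0 := rfl
      _ = N.eval relu (fun k => ∑ j, Mlin d k j *
            relu ((∑ j', W1 d j j' * x j') + c1 d j)) 0 := precomp_eval _ _ _ _ _
      _ = N.eval relu (fun k => bR (decide ((3:ℝ)/4 ≤ x k))) 0 := by
            rw [funext (fun k => layer_sum_eq x hx k)]
      _ = bR (g (fun i => decide ((3:ℝ)/4 ≤ x i))) := hN _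

end
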